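/- Let R be a commutative ring and k₁, k₂ > 1 integers with c_j = 2k_j − 1. Let M ⊆ ℤ₊³ be the monoid generated by t₁², t₂², t₃², t₁t₃, t₂t₃. Then the R-algebra automorphism η of R[t₁,t₂,t₃] defined by η(t_j) = t_j + t₃^{c_j} for j = 1,2 and η(t₃) = t₃ restricts to an automorphism of R[M]. -/

import Mathlib

open MvPolynomial

private lemma aux7 {R : Type*} [CommRing R] (c : Fin 2 → ℕ) (m : Fin 2 → ℕ)
    (hcm : ∀ j, c j = 2 * m j + 1) (r : Fin 2 → R)
    (M : AddSubmonoid ((Fin 3) →₀ ℕ))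
    (hM : M = AddSubmonoid.closure
      {Finsupp.single 0 2, Finsupp.single 1 2, Finsupp.single 2 2,
       Finsupp.single 0 1 + Finsupp.single 2 1,
       Finsupp.single 1 1 + Finsupp.single 2 1})
    (RM : Submodule R (MvPolynomial (Fin 3) R))
    (hRM : RM = Submodule.span R
      {p : MvPolynomial (Fin 3) R | ∃ v ∈ M, p = monomial v (1 : R)}) :
    ∀ p ∈ RM, aeval (fun i : Fin 3 => if h : (i : ℕ) < 2
      then X i + C (r ⟨i, h⟩) * (X 2 : MvPolynomial (Fin 3) R) ^ (c ⟨i, h⟩) else X i) p ∈ RM := by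
  set g : Fin 3 → MvPolynomial (Fin 3) R := fun i => if h : (i : ℕ) < 2
      then X i + C (r ⟨i, h⟩) * (X 2 : MvPolynomial (Fin 3) R) ^ (c ⟨i, h⟩) else X i with hg
  have memM : ∀ v ∈ M, monomial v (1 : R) ∈ RM := fun v hv =>
    hRM ▸ Submodule.subset_span ⟨v, hv, rfl⟩
  have hmul : ∀ p ∈ RM, ∀ q ∈ RM, p * q ∈ RM := by
    rw [hRM]
    intro p hp
    induction hp using Submodule.span_induction with
    | mem x hx =>
      intro q hq
      induction hq using Submodule.span_induction with
      | mem y hy =>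
        obtain ⟨v, hv, rfl⟩ := hx
        obtain ⟨w, hw, rfl⟩ := hy
        rw [monomial_mul, one_mul]
        exact Submodule.subset_span ⟨v + w, M.add_mem hv hw, rfl⟩
      | zero => simp
      | add a b _ _ ha hb => rw [mul_add]; exact Submodule.add_mem _ ha hb
      | smul t a _ ha => rw [mul_smul_comm]; exact Submodule.smul_mem _ _ ha
    | zero => intro q hq; simp
    | add a b _ _ ha hb => intro q hq; rw [add_mul]; exact Submodule.add_mem _ (ha q hq) (hb q hq)
    | smul t a _ ha => intro q hq; rw [smul_mul_assoc]; exact Submodule.smul_mem _ _ (ha q hq)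
  have hone : (1 : MvPolynomial (Fin 3) R) ∈ RM := by
    have := memM 0 M.zero_mem
    simpa using this
  have hgen : ∀ v ∈ ({Finsupp.single 0 2, Finsupp.single 1 2, Finsupp.single 2 2,
       Finsupp.single 0 1 + Finsupp.single 2 1,
       Finsupp.single 1 1 + Finsupp.single 2 1} : Set ((Fin 3) →₀ ℕ)), v ∈ M := by
    intro v hv; rw [hM]; exact AddSubmonoid.subset_closure hv
  have heven : ∀ n : ℕ, Finsupp.single (2 : Fin 3) (2 * n) ∈ M := by
    intro n
    have h2 : Finsupp.single (2 : Fin 3) 2 ∈ M := hgen _ (by simp)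
    have := AddSubmonoid.nsmul_mem M h2 n
    rwa [Finsupp.smul_single, smul_eq_mul, mul_comm] at this
  have hmix0 : ∀ n : ℕ, Finsupp.single (0 : Fin 3) 1 + Finsupp.single 2 (2 * n + 1) ∈ M := by
    intro n
    rw [show 2 * n + 1 = 1 + 2 * n by ring, Finsupp.single_add, ← add_assoc]
    exact M.add_mem (hgen _ (by simp)) (heven n)
  have hmix1 : ∀ n : ℕ, Finsupp.single (1 : Fin 3) 1 + Finsupp.single 2 (2 * n + 1) ∈ M := by
    intro n
    rw [show 2 * n + 1 = 1 + 2 * n by ring, Finsupp.single_add, ← add_assoc]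
    exact M.add_mem (hgen _ (by simp)) (heven n)
  have hXmono : ∀ i : Fin 3, (X i : MvPolynomial (Fin 3) R) = monomial (Finsupp.single i 1) 1 :=
    fun i => by rw [← X_pow_eq_monomial, pow_one]
  have hX2 : ∀ n : ℕ, (X (2 : Fin 3) : MvPolynomial (Fin 3) R) ^ (2 * n) ∈ RM := fun n => by
    rw [X_pow_eq_monomial]; exact memM _ (heven n)
  have hmixP0 : ∀ n : ℕ, (X (0 : Fin 3) : MvPolynomial (Fin 3) R) * X 2 ^ (2 * n + 1) ∈ RM := fun n => by
    rw [hXmono 0, X_pow_eq_monomial, monomial_mul, one_mul]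
    exact memM _ (hmix0 n)
  have hmixP1 : ∀ n : ℕ, (X (1 : Fin 3) : MvPolynomial (Fin 3) R) * X 2 ^ (2 * n + 1) ∈ RM := fun n => by
    rw [hXmono 1, X_pow_eq_monomial, monomial_mul, one_mul]
    exact memM _ (hmix1 n)
  have hXsq : ∀ i : Fin 3, (X i : MvPolynomial (Fin 3) R) ^ 2 ∈ RM := fun i => by
    rw [X_pow_eq_monomial]
    refine memM _ (hgen _ ?_)
    fin_cases i <;> simp
  have hC : ∀ (a : R) (x : MvPolynomial (Fin 3) R), x ∈ RM → C a * x ∈ RM := fun a x hx => by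
    rw [← smul_eq_C_mul]; exact RM.smul_mem a hx
  intro p hp
  rw [hRM] at hp
  induction hp using Submodule.span_induction with
  | mem x hx =>
    obtain ⟨v, hv, rfl⟩ := hx
    rw [hM] at hv
    induction hv using AddSubmonoid.closure_induction with
    | mem w hw =>
      have hg0 : g 0 = X 0 + C (r 0) * X 2 ^ (c 0) := by simp [g]
      have hg1 : g 1 = X 1 + C (r 1) * X 2 ^ (c 1) := by simp [g]
      have hg2 : g 2 = X 2 := by simp [g]
      rcases hw with rfl | rfl | rfl | rfl | rfl
      · rw [← X_pow_eq_monomial, map_pow, aeval_X, hg0, hcm 0]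
        rw [show (X (0:Fin 3) + C (r 0) * X 2 ^ (2 * m 0 + 1)) ^ 2
            = X 0 ^ 2 + (C (r 0) * (X 0 * X 2 ^ (2 * m 0 + 1)) + C (r 0) * (X 0 * X 2 ^ (2 * m 0 + 1)))
              + C (r 0) * (C (r 0) * X 2 ^ (2 * (2 * m 0 + 1))) by ring]
        exact RM.add_mem (RM.add_mem (hXsq 0)
          (RM.add_mem (hC _ _ (hmixP0 _)) (hC _ _ (hmixP0 _)))) (hC _ _ (hC _ _ (hX2 _)))
      · rw [← X_pow_eq_monomial, map_pow, aeval_X, hg1, hcm 1]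
        rw [show (X (1:Fin 3) + C (r 1) * X 2 ^ (2 * m 1 + 1)) ^ 2
            = X 1 ^ 2 + (C (r 1) * (X 1 * X 2 ^ (2 * m 1 + 1)) + C (r 1) * (X 1 * X 2 ^ (2 * m 1 + 1)))
              + C (r 1) * (C (r 1) * X 2 ^ (2 * (2 * m 1 + 1))) by ring]
        exact RM.add_mem (RM.add_mem (hXsq 1)
          (RM.add_mem (hC _ _ (hmixP1 _)) (hC _ _ (hmixP1 _)))) (hC _ _ (hC _ _ (hX2 _)))
      · rw [← X_pow_eq_monomial, map_pow, aeval_X, hg2]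
        exact hXsq 2
      · rw [show monomial (Finsupp.single (0:Fin 3) 1 + Finsupp.single 2 1) (1:R) = X 0 * X 2 by
            rw [hXmono 0, hXmono 2, monomial_mul, one_mul], map_mul, aeval_X, aeval_X, hg0, hg2, hcm 0]
        rw [show (X (0:Fin 3) + C (r 0) * X 2 ^ (2 * m 0 + 1)) * X 2
            = X 0 * X 2 ^ (2 * 0 + 1) + C (r 0) * X 2 ^ (2 * (m 0 + 1)) by ring]
        exact RM.add_mem (hmixP0 0) (hC _ _ (hX2 _))
      · rw [show monomial (Finsupp.single (1:Fin 3) 1 + Finsupp.single 2 1) (1:R) = X 1 * X 2 by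
            rw [hXmono 1, hXmono 2, monomial_mul, one_mul], map_mul, aeval_X, aeval_X, hg1, hg2, hcm 1]
        rw [show (X (1:Fin 3) + C (r 1) * X 2 ^ (2 * m 1 + 1)) * X 2
            = X 1 * X 2 ^ (2 * 0 + 1) + C (r 1) * X 2 ^ (2 * (m 1 + 1)) by ring]
        exact RM.add_mem (hmixP1 0) (hC _ _ (hX2 _))
    | zero =>
      simp only [monomial_zero', C_1, map_one]
      exact hone
    | add v w _ _ ihv ihw =>
      rw [show monomial (v + w) (1:R) = monomial v 1 * monomial w 1 by
        rw [monomial_mul, one_mul], map_mul]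
      exact hmul _ ihv _ ihw
  | zero => rw [map_zero]; exact RM.zero_mem
  | add a b _ _ ha hb => rw [map_add]; exact RM.add_mem ha hb
  | smul t a _ ha => rw [map_smul]; exact RM.smul_mem t ha

/-- Let `M ⊆ ℤ₊³` be the monoid generated by `t₁², t₂², t₃², t₁t₃, t₂t₃`, and for
integers `k₁, k₂ > 1` set `c j = 2 * k j - 1`.  The `R`-algebra automorphism `η` of
`R[t₁,t₂,t₃]` given by `t_j ↦ t_j + t₃ ^ (c j)` (`j = 1,2`), `t₃ ↦ t₃`, with inverse
`η'` given by `t_j ↦ t_j - t₃ ^ (c j)`, restricts to an automorphism of `R[M]`. -/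
theorem stmt7 (R : Type*) [CommRing R] (c k : Fin 2 → ℕ) (hk : ∀ j, 1 < k j)
    (hc : ∀ j, c j = 2 * k j - 1)
    (M : AddSubmonoid ((Fin 3) →₀ ℕ))
    (hM : M = AddSubmonoid.closure
      {Finsupp.single 0 2, Finsupp.single 1 2, Finsupp.single 2 2,
       Finsupp.single 0 1 + Finsupp.single 2 1,
       Finsupp.single 1 1 + Finsupp.single 2 1})
    (RM : Submodule R (MvPolynomial (Fin 3) R))
    (hRM : RM = Submodule.span R
      {p : MvPolynomial (Fin 3) R | ∃ v ∈ M, p = monomial v (1 : R)})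
    (η η' : MvPolynomial (Fin 3) R →ₐ[R] MvPolynomial (Fin 3) R)
    (hη : η = aeval (fun i : Fin 3 => if h : (i : ℕ) < 2
      then X i + (X 2 : MvPolynomial (Fin 3) R) ^ (c ⟨i, h⟩) else X i))
    (hη' : η' = aeval (fun i : Fin 3 => if h : (i : ℕ) < 2
      then X i - (X 2 : MvPolynomial (Fin 3) R) ^ (c ⟨i, h⟩) else X i)) :
    η'.comp η = AlgHom.id R _ ∧ η.comp η' = AlgHom.id R _ ∧
    (∀ p ∈ RM, η p ∈ RM) ∧ (∀ p ∈ RM, η' p ∈ RM) := by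
  have hcm : ∀ j, c j = 2 * (k j - 1) + 1 := by
    intro j; have h1 := hk j; have h2 := hc j; omega
  have hη1 : η = aeval (fun i : Fin 3 => if h : (i : ℕ) < 2
      then X i + C ((fun _ : Fin 2 => (1 : R)) ⟨i, h⟩) * (X 2 : MvPolynomial (Fin 3) R) ^ (c ⟨i, h⟩)
      else X i) := by
    rw [hη]; congr 1; funext i; split <;> simp
  have hη2 : η' = aeval (fun i : Fin 3 => if h : (i : ℕ) < 2
      then X i + C ((fun _ : Fin 2 => (-1 : R)) ⟨i, h⟩) * (X 2 : MvPolynomial (Fin 3) R) ^ (c ⟨i, h⟩)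
      else X i) := by
    rw [hη']; congr 1; funext i; split
    · rw [map_neg, C_1]; ring
    · rfl
  refine ⟨?_, ?_, ?_, ?_⟩
  · rw [hη, hη']
    apply MvPolynomial.algHom_ext
    intro i
    fin_cases i <;> simp
  · rw [hη, hη']
    apply MvPolynomial.algHom_ext
    intro i
    fin_cases i <;> simp
  · rw [hη1]
    exact aux7 c (fun j => k j - 1) hcm (fun _ : Fin 2 => (1 : R)) M hM RM hRM
  · rw [hη2]
    exact aux7 c (fun j => k j - 1) hcm (fun _ : Fin 2 => (-1 : R)) M hM RM hRM
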